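/- Let r ≥ 2 and m ≥ 1 be integers and let C be the binary code of length (r+1)^m defined by the parity-check matrix H. If two codewords x, y ∈ C agree on all coordinates outside a set E ⊆ Z_{r+1}^m with |E| ≤ 2^m - 1, then x = y; equivalently, every nonzero codeword of C has Hamming weight at least 2^m, so any 2^m - 1 erasures can be corrected. -/

import Mathlib

open Finset

/-- `Z_r^m ⊆ Z_{r+1}^m`: the tuples all of whose entries are `< r`;
`Lset r m α` is the set `L(α) = {μ ∈ Z_r^m : μ_j = α_j for all j ∈ T(α)}`,
where `T(α) = {j : α_j ≤ r-1}`. -/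
def Lset (r m : ℕ) (α : Fin m → Fin (r + 1)) : Finset (Fin m → Fin (r + 1)) :=
  Finset.univ.filter fun μ =>
    (∀ j, (μ j : ℕ) < r) ∧ ∀ j, (α j : ℕ) < r → μ j = α j

/-- The binary code `C` with parity-check matrix `H`: all vectors
`x ∈ F_2^{Z_{r+1}^m}` with `x_α = ∑_{β ∈ L(α)} x_β` for every
`α ∈ Z_{r+1}^m \ Z_r^m`. -/
def codeC (r m : ℕ) : Set ((Fin m → Fin (r + 1)) → ZMod 2) :=
  {x | ∀ α : Fin m → Fin (r + 1), ¬(∀ j, (α j : ℕ) < r) →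
    x α = ∑ β ∈ Lset r m α, x β}

lemma mem_Lset {r m : ℕ} {α μ : Fin m → Fin (r + 1)} :
    μ ∈ Lset r m α ↔ (∀ j, (μ j : ℕ) < r) ∧ ∀ j, (α j : ℕ) < r → μ j = α j := by
  simp [Lset]

lemma Lset_self {r m : ℕ} {α : Fin m → Fin (r + 1)} (h : ∀ j, (α j : ℕ) < r) :
    Lset r m α = {α} := by
  ext μ
  simp only [mem_Lset, Finset.mem_singleton]
  constructor
  · rintro ⟨-, h2⟩; exact funext fun j => h2 j (h j)
  · rintro rfl; exact ⟨h, fun j _ => rfl⟩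

lemma mem_codeC_iff {r m : ℕ} {x : (Fin m → Fin (r + 1)) → ZMod 2} :
    x ∈ codeC r m ↔ ∀ α, x α = ∑ β ∈ Lset r m α, x β := by
  constructor
  · intro hx α
    by_cases hα : ∀ j, (α j : ℕ) < r
    · rw [Lset_self hα, Finset.sum_singleton]
    · exact hx α hα
  · intro h α _; exact h α

lemma codeC_sub {r m : ℕ} {x y : (Fin m → Fin (r + 1)) → ZMod 2}
    (hx : x ∈ codeC r m) (hy : y ∈ codeC r m) : x - y ∈ codeC r m := by
  intro α hα
  simp only [Pi.sub_apply, hx α hα, hy α hα, Finset.sum_sub_distrib]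

lemma eq_zero_of_good {r m : ℕ} {x : (Fin m → Fin (r + 1)) → ZMod 2}
    (hx : x ∈ codeC r m) (h : ∀ μ, (∀ j, (μ j : ℕ) < r) → x μ = 0) : x = 0 := by
  funext α
  by_cases hα : ∀ j, (α j : ℕ) < r
  · exact h α hα
  · rw [hx α hα]
    exact Finset.sum_eq_zero fun β hβ => h β (mem_Lset.mp hβ).1

lemma exists_good_ne_zero {r m : ℕ} {x : (Fin m → Fin (r + 1)) → ZMod 2}
    (hx : x ∈ codeC r m) (h : x ≠ 0) : ∃ μ, (∀ j, (μ j : ℕ) < r) ∧ x μ ≠ 0 := by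
  by_contra hc
  push_neg at hc
  exact h (eq_zero_of_good hx hc)

lemma Lset_cons {r m : ℕ} (c : Fin (r + 1)) (α' : Fin m → Fin (r + 1)) :
    Lset r (m + 1) (Fin.cons c α') =
      ((Finset.univ.filter fun v : Fin (r + 1) => (v : ℕ) < r ∧ ((c : ℕ) < r → v = c)) ×ˢ
        Lset r m α').image (fun p => Fin.cons p.1 p.2) := by
  ext β
  simp only [Finset.mem_image, Finset.mem_product, Finset.mem_filter, Finset.mem_univ,
    true_and, mem_Lset]
  constructor
  · rintro ⟨h1, h2⟩
    refine ⟨(β 0, Fin.tail β), ⟨⟨h1 0, fun hc => ?_⟩, fun j => h1 j.succ, fun j hj => ?_⟩, ?_⟩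
    · have := h2 0 (by simpa using hc); simpa using this
    · have := h2 j.succ (by simpa using hj); simpa [Fin.tail] using this
    · exact Fin.cons_self_tail β
  · rintro ⟨⟨v, β'⟩, ⟨⟨hv1, hv2⟩, hb1, hb2⟩, rfl⟩
    constructor
    · intro j
      refine Fin.cases ?_ ?_ j <;> simp [hv1, hb1]
    · intro j
      refine Fin.cases ?_ ?_ j
      · simpa using hv2
      · intro i; simpa using hb2 i

lemma cons_injOn {r m : ℕ} :
    Function.Injective (fun p : Fin (r + 1) × (Fin m → Fin (r + 1)) => Fin.cons p.1 p.2 :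
      _ → Fin (m + 1) → Fin (r + 1)) := by
  rintro ⟨v, β⟩ ⟨w, γ⟩ h
  simp only at h
  have h0 : v = w := by
    have := congrFun h 0; simpa using this
  have h1 : β = γ := by
    funext j; have := congrFun h j.succ; simpa using this
  simp [h0, h1]

lemma sum_Lset_cons {r m : ℕ} (c : Fin (r + 1)) (α' : Fin m → Fin (r + 1))
    (f : (Fin (m + 1) → Fin (r + 1)) → ZMod 2) :
    ∑ β ∈ Lset r (m + 1) (Fin.cons c α'), f β =
      ∑ v ∈ Finset.univ.filter fun v : Fin (r + 1) => (v : ℕ) < r ∧ ((c : ℕ) < r → v = c),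
        ∑ β' ∈ Lset r m α', f (Fin.cons v β') := by
  rw [Lset_cons, Finset.sum_image (fun a _ b _ h => cons_injOn h), Finset.sum_product]

lemma card_support_succ {r m : ℕ} (x : (Fin (m + 1) → Fin (r + 1)) → ZMod 2) :
    (Finset.univ.filter fun β => x β ≠ 0).card =
      ∑ v : Fin (r + 1), (Finset.univ.filter fun β' => x (Fin.cons v β') ≠ 0).card := by
  simp only [Finset.card_filter]
  rw [← (Fin.consEquiv (fun _ => Fin (r + 1))).sum_comp
    (fun β => if x β ≠ 0 then 1 else 0)]
  rw [Fintype.sum_prod_type]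
  rfl

lemma weight_lemma {r : ℕ} (hr : 1 ≤ r) :
    ∀ m, ∀ x ∈ codeC r m, x ≠ 0 →
      2 ^ m ≤ (Finset.univ.filter fun β => x β ≠ 0).card := by
  intro m
  induction m with
  | zero =>
    intro x _ hx
    have : ∃ β, x β ≠ 0 := by
      by_contra hc; push_neg at hc; exact hx (funext hc)
    obtain ⟨β, hβ⟩ := this
    have : (Finset.univ.filter fun β => x β ≠ 0).Nonempty :=
      ⟨β, Finset.mem_filter.mpr ⟨Finset.mem_univ _, hβ⟩⟩
    simpa using Finset.card_pos.mpr this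
  | succ m ih =>
    intro x hx hx0
    set slice : Fin (r + 1) → (Fin m → Fin (r + 1)) → ZMod 2 :=
      fun c β' => x (Fin.cons c β') with hslice_def
    have hxs := mem_codeC_iff.mp hx
    -- each slice is a codeword
    have hslice : ∀ c, slice c ∈ codeC r m := by
      intro c
      rw [mem_codeC_iff]
      intro α'
      by_cases hc : (c : ℕ) < r
      · have := hxs (Fin.cons c α')
        rw [sum_Lset_cons] at this
        have hfil : (Finset.univ.filter fun v : Fin (r + 1) =>
            (v : ℕ) < r ∧ ((c : ℕ) < r → v = c)) = {c} := by
          ext v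
          simp only [Finset.mem_filter, Finset.mem_univ, true_and, Finset.mem_singleton]
          constructor
          · rintro ⟨-, h2⟩; exact h2 hc
          · rintro rfl; exact ⟨hc, fun _ => rfl⟩
        rw [hfil, Finset.sum_singleton] at this
        exact this
      · -- c = "r" slice
        have key : ∀ β' : Fin m → Fin (r + 1), (∀ j, (β' j : ℕ) < r) →
            slice c β' = ∑ v ∈ Finset.univ.filter fun v : Fin (r + 1) => (v : ℕ) < r,
              x (Fin.cons v β') := by
          intro β' hβ'
          have := hxs (Fin.cons c β')
          rw [sum_Lset_cons, Lset_self hβ'] at this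
          simp only [Finset.sum_singleton] at this
          simpa [hc] using this
        have := hxs (Fin.cons c α')
        rw [sum_Lset_cons] at this
        simp only [hc, false_implies, and_true] at this
        simp only [hslice_def]
        rw [this, Finset.sum_comm]
        refine Finset.sum_congr rfl fun β' hβ' => ?_
        exact (key β' (mem_Lset.mp hβ').1).symm
    -- there exist two distinct nonzero slices
    have key2 : ∃ c1 c2 : Fin (r + 1), c1 ≠ c2 ∧ slice c1 ≠ 0 ∧ slice c2 ≠ 0 := by
      obtain ⟨μ, hμg, hμ⟩ := exists_good_ne_zero hx hx0
      have hv0 : (μ 0 : ℕ) < r := hμg 0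
      have hs0 : slice (μ 0) ≠ 0 := by
        intro h
        apply hμ
        have := congrFun h (Fin.tail μ)
        simpa [hslice_def, Fin.cons_self_tail] using this
      by_cases hex : ∃ c, c ≠ μ 0 ∧ slice c ≠ 0
      · obtain ⟨c, hc1, hc2⟩ := hex
        exact ⟨μ 0, c, Ne.symm hc1, hs0, hc2⟩
      · exfalso
        push_neg at hex
        set cR : Fin (r + 1) := ⟨r, Nat.lt_succ_self r⟩ with hcR
        have hne : cR ≠ μ 0 := by
          intro h
          rw [← h] at hv0
          simp [hcR] at hv0
        have hzero : slice cR = 0 := hex cR hne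
        have hgood : ∀ j, ((Fin.tail μ) j : ℕ) < r := fun j => hμg j.succ
        have := hxs (Fin.cons cR (Fin.tail μ))
        rw [sum_Lset_cons, Lset_self hgood] at this
        simp only [Finset.sum_singleton] at this
        have hcr : ¬ ((cR : ℕ) < r) := by simp [hcR]
        simp only [hcr, false_implies, and_true] at this
        have hL : x (Fin.cons cR (Fin.tail μ)) = 0 := by
          have := congrFun hzero (Fin.tail μ)
          simpa [hslice_def] using this
        rw [hL] at this
        have hsum : ∑ v ∈ Finset.univ.filter fun v : Fin (r + 1) => (v : ℕ) < r,
            x (Fin.cons v (Fin.tail μ)) = x (Fin.cons (μ 0) (Fin.tail μ)) := by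
          refine Finset.sum_eq_single_of_mem (μ 0)
            (Finset.mem_filter.mpr ⟨Finset.mem_univ _, hv0⟩) ?_
          intro v _ hv
          have := hex v hv
          have := congrFun this (Fin.tail μ)
          simpa [hslice_def] using this
        rw [hsum, Fin.cons_self_tail] at this
        exact hμ this.symm
    obtain ⟨c1, c2, hne, h1, h2⟩ := key2
    rw [card_support_succ]
    calc 2 ^ (m + 1) = 2 ^ m + 2 ^ m := by ring
    _ ≤ (Finset.univ.filter fun β' => x (Fin.cons c1 β') ≠ 0).card +
        (Finset.univ.filter fun β' => x (Fin.cons c2 β') ≠ 0).card :=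
      Nat.add_le_add (ih (slice c1) (hslice c1) h1) (ih (slice c2) (hslice c2) h2)
    _ = ∑ v ∈ ({c1, c2} : Finset (Fin (r + 1))),
        (Finset.univ.filter fun β' => x (Fin.cons v β') ≠ 0).card :=
      (Finset.sum_pair (f := fun v => (Finset.univ.filter
        fun β' => x (Fin.cons v β') ≠ 0).card) hne).symm
    _ ≤ ∑ v : Fin (r + 1), (Finset.univ.filter fun β' => x (Fin.cons v β') ≠ 0).card :=
      Finset.sum_le_sum_of_subset (Finset.subset_univ _)

/-- If two codewords of `C` agree outside a set `E` with `|E| ≤ 2^m - 1`,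
they are equal; equivalently, every nonzero codeword has Hamming weight at
least `2^m`, so any `2^m - 1` erasures can be corrected. -/
theorem codeC_erasure_correction (r m : ℕ) (hr : 2 ≤ r) (hm : 1 ≤ m) :
    (∀ x ∈ codeC r m, ∀ y ∈ codeC r m, ∀ E : Finset (Fin m → Fin (r + 1)),
      E.card ≤ 2 ^ m - 1 → (∀ β ∉ E, x β = y β) → x = y) ∧
    (∀ x ∈ codeC r m, x ≠ 0 →
      2 ^ m ≤ (Finset.univ.filter fun β => x β ≠ 0).card) := by
  have hr1 : 1 ≤ r := le_trans (by norm_num) hr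
  constructor
  · intro x hx y hy E hE hagree
    by_contra hne
    have hd : x - y ∈ codeC r m := codeC_sub hx hy
    have hd0 : x - y ≠ 0 := sub_ne_zero.mpr hne
    have hw := weight_lemma hr1 m (x - y) hd hd0
    have hsub : (Finset.univ.filter fun β => (x - y) β ≠ 0) ⊆ E := by
      intro β hβ
      simp only [Finset.mem_filter, Pi.sub_apply, ne_eq, sub_eq_zero] at hβ
      by_contra hβE
      exact hβ.2 (hagree β hβE)
    have := le_trans hw (le_trans (Finset.card_le_card hsub) hE)
    have h1 : 1 ≤ 2 ^ m := Nat.one_le_two_pow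
    omega
  · exact fun x hx hx0 => weight_lemma hr1 m x hx hx0
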